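/- If G is a nontrivial connected graph of order n with rvc(G) = k, and G' is obtained from G by adding a new vertex v adjacent to q vertices of G where q ≥ n − k, then rvc(G') ≤ k. -/

import Mathlib

open SimpleGraph

/-- A coloring `c` (using colors `< k`) makes `G` rainbow vertex-connected: every pair of
vertices is joined by a path whose internal vertices receive distinct colors (all `< k`). -/
def IsRainbowVCColoring {V : Type*} (G : SimpleGraph V) (c : V → ℕ) (k : ℕ) : Prop :=
  ∀ u v : V, ∃ p : G.Walk u v, p.IsPath ∧
    (p.support.tail.dropLast.map c).Nodup ∧
    ∀ x ∈ p.support.tail.dropLast, c x < k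

/-- The rainbow vertex-connection number: the least number of colors making `G`
rainbow vertex-connected. -/
noncomputable def rvc {V : Type*} (G : SimpleGraph V) : ℕ :=
  sInf {k | ∃ c : V → ℕ, IsRainbowVCColoring G c k}

/-- The graph obtained from `G` by adding one new vertex (`none`) joined to the
vertices in `S`. -/
def addVertex {V : Type*} (G : SimpleGraph V) (S : Set V) : SimpleGraph (Option V) :=
  SimpleGraph.fromRel (fun x y =>
    match x, y with
    | some a, some b => G.Adj a b
    | none, some a => a ∈ S
    | _, _ => False)

section RvcHelpers
variable {α β : Type*}

private lemma map_tail_dropLast (f : α → β) (l : List α) :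
    (l.map f).tail.dropLast = (l.tail.dropLast).map f := by
  cases l with
  | nil => simp
  | cons a l => simp [List.map_dropLast]



section Helpers
variable {α : Type*}

private lemma tail_getLast {l : List α} (h2 : l.tail ≠ []) (h : l ≠ []) :
    l.tail.getLast h2 = l.getLast h := by
  cases l with
  | nil => exact absurd rfl h
  | cons a l => exact (List.getLast_cons h2).symm

private lemma dropLast_reverse' (l : List α) : l.reverse.dropLast = l.tail.reverse := by
  have h := List.tail_reverse (l := l.reverse)
  rw [List.reverse_reverse] at h
  calc l.reverse.dropLast = l.reverse.dropLast.reverse.reverse := (List.reverse_reverse _).symm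
    _ = l.tail.reverse := by rw [← h]

private lemma tail_dropLast_comm (l : List α) : l.dropLast.tail = l.tail.dropLast := by
  cases l with
  | nil => simp
  | cons a l =>
    by_cases hl : l = []
    · subst hl; simp
    · rw [List.dropLast_cons_of_ne_nil hl]
      simp

private lemma nodup_getLast_not_mem_dropLast {l : List α} (hn : l.Nodup) (h : l ≠ []) :
    l.getLast h ∉ l.dropLast := by
  intro hmem
  have heq := List.dropLast_append_getLast h
  rw [← heq] at hn
  rcases List.nodup_append'.mp hn with ⟨-, -, hd⟩
  exact hd hmem (by simp)

variable {H : SimpleGraph α}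

private lemma walk_tail_getLast {u v : α} (p : H.Walk u v) (h : p.support.tail ≠ []) :
    p.support.tail.getLast h = v := by
  rw [tail_getLast h p.support_ne_nil, p.getLast_support]

private lemma support_tail_split {u v : α} (p : H.Walk u v) (h : p.support.tail ≠ []) :
    p.support.tail = p.support.tail.dropLast ++ [v] := by
  conv_lhs => rw [← List.dropLast_append_getLast h]
  rw [walk_tail_getLast p h]

private lemma mem_support_split {u v : α} (p : H.Walk u v) {x : α} (hx : x ∈ p.support) :
    x = u ∨ x ∈ p.support.tail.dropLast ∨ x = v := by
  rw [p.support_eq_cons] at hx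
  rcases List.mem_cons.mp hx with h | h
  · exact Or.inl h
  · by_cases ht : p.support.tail = []
    · rw [ht] at h; simp at h
    · rw [support_tail_split p ht] at h
      rcases List.mem_append.mp h with h | h
      · exact Or.inr (Or.inl h)
      · simp at h; exact Or.inr (Or.inr h)

private lemma internals_reverse {u v : α} (p : H.Walk u v) :
    p.reverse.support.tail.dropLast = p.support.tail.dropLast.reverse := by
  rw [Walk.support_reverse, List.tail_reverse, dropLast_reverse',
    tail_dropLast_comm]

private lemma internals_sublist_support {u v : α} (p : H.Walk u v) :
    p.support.tail.dropLast.Sublist p.support :=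
  (List.dropLast_sublist _).trans (List.tail_sublist _)

private lemma path_end_not_mem_dropLast {u v : α} (p : H.Walk u v) (hp : p.IsPath) :
    v ∉ p.support.dropLast := by
  have h := nodup_getLast_not_mem_dropLast hp.support_nodup p.support_ne_nil
  rwa [p.getLast_support] at h

def GoodW (H : SimpleGraph α) (c : α → ℕ) (k : ℕ) (u v : α) : Prop :=
  ∃ p : H.Walk u v, p.IsPath ∧ (p.support.tail.dropLast.map c).Nodup ∧
    ∀ x ∈ p.support.tail.dropLast, c x < k

lemma GoodW.symm {c : α → ℕ} {k : ℕ} {u v : α} (h : GoodW H c k u v) : GoodW H c k v u := by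
  obtain ⟨p, hp, hnd, hlt⟩ := h
  refine ⟨p.reverse, hp.reverse, ?_, ?_⟩
  · rw [internals_reverse p, List.map_reverse, List.nodup_reverse]
    exact hnd
  · intro x hx
    rw [internals_reverse p, List.mem_reverse] at hx
    exact hlt x hx

end Helpers

def restrictGraph {α : Type*} (G : SimpleGraph α) (W : Set α) : SimpleGraph α where
  Adj x y := x ∈ W ∧ y ∈ W ∧ G.Adj x y
  symm := ⟨fun x y ⟨a, b, h⟩ => ⟨b, a, h.symm⟩⟩
  loopless := ⟨fun x ⟨_, _, h⟩ => G.loopless.irrefl x h⟩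

def walkToRestrict {α : Type*} {G : SimpleGraph α} {W : Set α} :
    {u v : α} → (p : G.Walk u v) → (∀ x ∈ p.support, x ∈ W) → (restrictGraph G W).Walk u v
  | _, _, Walk.nil, _ => Walk.nil
  | _, _, Walk.cons h q, hs =>
      Walk.cons ⟨hs _ (by simp), hs _ (by simp [Walk.support_cons, q.start_mem_support]), h⟩
        (walkToRestrict q (fun x hx => hs x (by simp [Walk.support_cons]; exact Or.inr hx)))

lemma restrict_support_mem {α : Type*} {G : SimpleGraph α} {W : Set α} {u v : α}
    (p : (restrictGraph G W).Walk u v) (hu : u ∈ W) : ∀ x ∈ p.support, x ∈ W := by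
  induction p with
  | nil => intro x hx; simp at hx; rwa [hx]
  | @cons a b c h q ih =>
    intro x hx
    rw [Walk.support_cons, List.mem_cons] at hx
    rcases hx with hx | hx
    · rwa [hx]
    · exact ih h.2.1 x hx


lemma addVertex_adj_some_some {V : Type*} {G : SimpleGraph V} {S : Set V} {a b : V}
    (h : G.Adj a b) : (addVertex G S).Adj (some a) (some b) :=
  (SimpleGraph.fromRel_adj _ _ _).mpr ⟨by simpa using h.ne, Or.inl h⟩

lemma addVertex_adj_none_some {V : Type*} {G : SimpleGraph V} {S : Set V} {a : V}
    (h : a ∈ S) : (addVertex G S).Adj none (some a) :=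
  (SimpleGraph.fromRel_adj _ _ _).mpr ⟨by simp, Or.inl h⟩

lemma addVertex_adj_none {V : Type*} {G : SimpleGraph V} {S : Set V} {x : Option V}
    (h : (addVertex G S).Adj none x) : ∃ a, x = some a ∧ a ∈ S := by
  rcases x with _ | a
  · exact absurd rfl ((SimpleGraph.fromRel_adj _ _ _).mp h).1
  · rcases ((SimpleGraph.fromRel_adj _ _ _).mp h).2 with h' | h'
    · exact ⟨a, rfl, h'⟩
    · exact h'.elim


end RvcHelpers

theorem rvc_addVertex_le {V : Type*} [Fintype V] (G : SimpleGraph V)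
    (hG : G.Connected) (hn : 2 ≤ Fintype.card V) (k q : ℕ) (hk : rvc G = k)
    (S : Finset V) (hq : S.card = q) (hge : Fintype.card V - k ≤ q) :
    rvc (addVertex G (S : Set V)) ≤ k := by
  classical
  have hVne : Nonempty V := Fintype.card_pos_iff.mp (by omega)
  by_cases hS : S.Nonempty
  case neg =>
    have hSe : S = ∅ := Finset.not_nonempty_iff_eq_empty.mp hS
    have hempty : {m | ∃ c' : Option V → ℕ,
        IsRainbowVCColoring (addVertex G (S : Set V)) c' m} = ∅ := by
      rw [Set.eq_empty_iff_forall_notMem]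
      rintro m ⟨c', hc'⟩
      obtain ⟨v⟩ := hVne
      obtain ⟨p, -, -, -⟩ := hc' none (some v)
      cases p with
      | cons h q' =>
        obtain ⟨a, -, ha⟩ := addVertex_adj_none h
        rw [hSe] at ha
        simp at ha
    rw [rvc, hempty, Nat.sInf_empty]
    omega
  case pos =>
  -- get an optimal rainbow coloring of G
  have hmemN : (Fintype.card V) ∈ {m | ∃ c0 : V → ℕ, IsRainbowVCColoring G c0 m} := by
    refine ⟨fun v => (Fintype.equivFin V v : ℕ), fun u v => ?_⟩
    obtain ⟨w⟩ := hG.preconnected u v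
    refine ⟨(w.toPath : G.Walk u v), w.toPath.2, ?_, fun x _ => (Fintype.equivFin V x).isLt⟩
    exact List.Nodup.map (Fin.val_injective.comp (Fintype.equivFin V).injective)
      (((internals_sublist_support _).nodup) (w.toPath.2.support_nodup))
  have hkc : ∃ c : V → ℕ, IsRainbowVCColoring G c k := by
    have h1 := Nat.sInf_mem (⟨_, hmemN⟩ :
      {m | ∃ c0 : V → ℕ, IsRainbowVCColoring G c0 m}.Nonempty)
    rw [rvc] at hk
    rwa [hk] at h1
  obtain ⟨c, hc⟩ := hkc
  set Wf : Finset V := Sᶜ with hWf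
  have hWcard : Wf.card ≤ k := by
    have h2 : Wf.card = Fintype.card V - S.card := by rw [hWf]; exact Finset.card_compl S
    omega
  set G' := addVertex G (S : Set V) with hG'
  rw [rvc]
  by_cases hP : ∀ u ∈ Wf, ∃ s ∈ S, ∃ p : G.Walk u s, p.IsPath ∧
      ((p.support.tail).map c).Nodup ∧ ∀ x ∈ p.support.tail, c x < k
  · -- Case A : keep the coloring c
    set c' : Option V → ℕ := fun o => o.elim 0 c with hc'def
    let f : G →g G' := ⟨some, fun h => addVertex_adj_some_some h⟩
    have hfc : ∀ (l : List V), (l.map some).map c' = l.map c := by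
      intro l; rw [List.map_map]; rfl
    have hsome : ∀ u v : V, GoodW G' c' k (some u) (some v) := by
      intro u v
      obtain ⟨p, hp, hnd, hlt⟩ := hc u v
      refine ⟨p.map f, Walk.map_isPath_of_injective (Option.some_injective V) hp, ?_, ?_⟩
      · rw [show (p.map f).support = p.support.map some from Walk.support_map f p,
          map_tail_dropLast, hfc]
        exact hnd
      · intro x hx
        rw [show (p.map f).support = p.support.map some from Walk.support_map f p,
          map_tail_dropLast, List.mem_map] at hx
        obtain ⟨y, hy, rfl⟩ := hx
        exact hlt y hy
    have hnone : ∀ v : V, GoodW G' c' k none (some v) := by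
      intro v
      by_cases hv : v ∈ S
      · refine ⟨Walk.cons (addVertex_adj_none_some (by simpa using hv)) Walk.nil, ?_, ?_, ?_⟩
        · simp [Walk.cons_isPath_iff]
        · simp
        · simp
      · obtain ⟨s, hsS, p, hp, hnd, hlt⟩ := hP v (Finset.mem_compl.mpr hv)
        refine ⟨Walk.cons (addVertex_adj_none_some (by simpa using hsS)) ((p.map f).reverse),
          ?_, ?_, ?_⟩
        · rw [Walk.cons_isPath_iff]
          refine ⟨(Walk.map_isPath_of_injective (Option.some_injective V) hp).reverse, ?_⟩
          rw [Walk.support_reverse, List.mem_reverse,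
            show (p.map f).support = p.support.map some from Walk.support_map f p]
          simp
        · rw [show ∀ w : G'.Walk (some s) (some v), (Walk.cons (addVertex_adj_none_some
            (by simpa using hsS)) w).support = none :: w.support from fun w => Walk.support_cons _ w]
          rw [List.tail_cons, Walk.support_reverse, dropLast_reverse',
            show (p.map f).support = p.support.map some from Walk.support_map f p]
          rw [show (p.support.map some).tail = p.support.tail.map some by
            cases p.support <;> simp]
          rw [List.map_reverse, hfc, List.nodup_reverse]
          exact hnd
        · intro x hx
          rw [show ∀ w : G'.Walk (some s) (some v), (Walk.cons (addVertex_adj_none_some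
            (by simpa using hsS)) w).support = none :: w.support from fun w => Walk.support_cons _ w] at hx
          rw [List.tail_cons, Walk.support_reverse, dropLast_reverse',
            show (p.map f).support = p.support.map some from Walk.support_map f p] at hx
          rw [show (p.support.map some).tail = p.support.tail.map some by
            cases p.support <;> simp] at hx
          rw [List.mem_reverse, List.mem_map] at hx
          obtain ⟨y, hy, rfl⟩ := hx
          exact hlt y hy
    have hGood : ∀ x y : Option V, GoodW G' c' k x y := by
      intro x y
      match x, y with
      | none, none => exact ⟨Walk.nil, by simp, by simp, by simp⟩
      | none, some b => exact hnone b
      | some a, none => exact (hnone a).symm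
      | some a, some b => exact hsome a b
    exact Nat.sInf_le ⟨c', hGood⟩
  · -- Case B
    push_neg at hP
    obtain ⟨u₀, hu₀, hbad⟩ := hP
    -- every internal vertex of a rainbow path from u₀ lies in Wf
    have hB1 : ∀ (v : V) (p : G.Walk u₀ v), p.IsPath →
        ((p.support.tail.dropLast).map c).Nodup → (∀ x ∈ p.support.tail.dropLast, c x < k) →
        ∀ z ∈ p.support.tail.dropLast, z ∈ Wf := by
      intro v p hp hnd hlt z hz
      by_contra hzW
      have hzS : z ∈ S := by
        rw [hWf, Finset.mem_compl, not_not] at hzW; exact hzW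
      have hndsup := hp.support_nodup
      have hu₀tail : u₀ ∉ p.support.tail := by
        rw [p.support_eq_cons] at hndsup
        exact (List.nodup_cons.mp hndsup).1
      have hztail : z ∈ p.support.tail := List.mem_of_mem_dropLast hz
      have hzu₀ : z ≠ u₀ := fun h => hu₀tail (h ▸ hztail)
      have hzsup : z ∈ p.support := List.mem_of_mem_tail hztail
      have htne : p.support.tail ≠ [] := by
        intro h0; rw [h0] at hztail; simp at hztail
      have hsplit : p.support.tail = p.support.tail.dropLast ++ [v] := support_tail_split p htne
      have hvnotint : v ∉ p.support.tail.dropLast := by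
        have hndt : p.support.tail.Nodup := by
          rw [p.support_eq_cons] at hndsup; exact (List.nodup_cons.mp hndsup).2
        rw [hsplit] at hndt
        rcases List.nodup_append'.mp hndt with ⟨-, -, hd⟩
        exact fun hmem => hd hmem (by simp)
      have hzv : z ≠ v := fun h => hvnotint (h ▸ hz)
      set p₁ := p.takeUntil z hzsup with hp₁
      have hsup : p.support = p₁.support ++ (p.dropUntil z hzsup).support.tail := by
        conv_lhs => rw [← p.take_spec hzsup]
        rw [Walk.support_append]
      set T := p₁.support.tail with hT
      have htail : p.support.tail = T ++ (p.dropUntil z hzsup).support.tail := by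
        rw [p.support_eq_cons, p₁.support_eq_cons] at hsup
        rw [← hT] at hsup
        simp at hsup; rw [hsup, List.tail_cons]
      have hTR : T ++ (p.dropUntil z hzsup).support.tail
          = p.support.tail.dropLast ++ [v] := htail.symm.trans hsplit
      have hTne : T ≠ [] := by
        intro h0
        have hgl : p₁.support.getLast? = some z := by
          rw [List.getLast?_eq_getLast p₁.support_ne_nil, p₁.getLast_support]
        rw [p₁.support_eq_cons, ← hT, h0] at hgl
        simp at hgl
        exact hzu₀ hgl.symm
      have hTlast : T.getLast hTne = z := walk_tail_getLast p₁ hTne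
      have hTlen : T.length ≤ p.support.tail.dropLast.length := by
        by_contra hlen
        push_neg at hlen
        have htot : T.length + ((p.dropUntil z hzsup).support.tail).length
            = p.support.tail.dropLast.length + 1 := by
          have h7 := congrArg List.length hTR
          rw [List.length_append, List.length_append] at h7
          simpa using h7
        have hR : (p.dropUntil z hzsup).support.tail.length = 0 := by omega
        have hTeq : T = p.support.tail.dropLast ++ [v] := by
          have h5 := hTR
          rwa [List.length_eq_zero_iff.mp hR, List.append_nil] at h5
        have l1 : T.getLast? = some z := by
          rw [List.getLast?_eq_getLast hTne, hTlast]
        have l2 : T.getLast? = some v := by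
          rw [hTeq]; exact List.getLast?_concat
        rw [l1] at l2
        exact hzv (by injection l2)
      have hTeq2 : T = (p.support.tail.dropLast ++ [v]).take T.length := by
        have h6 := List.take_left (l₁ := T) (l₂ := (p.dropUntil z hzsup).support.tail)
        rw [hTR] at h6
        exact h6.symm
      have hTsub : T.Sublist p.support.tail.dropLast := by
        rw [hTeq2, List.take_append]
        rw [Nat.sub_eq_zero_of_le hTlen, List.take_zero, List.append_nil]
        exact List.take_sublist _ _
      obtain ⟨x, hx1, hx2⟩ := hbad z hzS p₁ (hp.takeUntil hzsup)
        (List.Nodup.sublist (hTsub.map c) hnd)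
      exact absurd (hlt x (hTsub.subset hx1)) (Nat.not_lt.mpr hx2)
    -- every vertex of S has a neighbour in Wf
    have hB2 : ∀ s ∈ S, ∃ a ∈ Wf, G.Adj s a := by
      intro s hsS
      obtain ⟨p, hp, hnd, hlt⟩ := hc u₀ s
      have hsu : s ≠ u₀ := by
        intro h
        rw [h] at hsS
        exact (Finset.mem_compl.mp (hWf ▸ hu₀)) hsS
      obtain ⟨w, hadj, p', hpeq⟩ := Walk.exists_eq_cons_of_ne hsu p.reverse
      have hw : w ∈ p.support := by
        have h1 : w ∈ p.reverse.support := by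
          rw [hpeq, Walk.support_cons]
          exact List.mem_cons_of_mem _ p'.start_mem_support
        rwa [Walk.support_reverse, List.mem_reverse] at h1
      rcases mem_support_split p hw with h | h | h
      · exact ⟨w, by rw [h]; exact hu₀, hadj⟩
      · exact ⟨w, hB1 s p hp hnd hlt w h, hadj⟩
      · exact (hadj.ne' h).elim
    -- the graph restricted to Wf
    set GW := restrictGraph G (↑Wf : Set V) with hGW
    have hB3 : ∀ w ∈ Wf, GW.Reachable u₀ w := by
      intro w hw
      by_cases hwu : w = u₀
      · rw [hwu]
      · obtain ⟨p, hp, hnd, hlt⟩ := hc u₀ w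
        have hsub : ∀ x ∈ p.support, x ∈ (↑Wf : Set V) := by
          intro x hx
          rcases mem_support_split p hx with h | h | h
          · rw [h]; exact hu₀
          · exact hB1 w p hp hnd hlt x h
          · rw [h]; exact hw
        exact ⟨walkToRestrict p hsub⟩
    have hR : ∀ x ∈ Wf, ∀ y ∈ Wf, GW.Reachable x y :=
      fun x hx y hy => (hB3 x hx).symm.trans (hB3 y hy)
    obtain ⟨s₁, hs₁⟩ := hS
    obtain ⟨a₀, ha₀W, ha₀adj⟩ := hB2 s₁ hs₁
    -- injective colouring of Wf
    set ψ : V → ℕ := fun x => List.idxOf x Wf.toList with hψ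
    have hψlt : ∀ x ∈ Wf, ψ x < k := by
      intro x hx
      show List.idxOf x Wf.toList < k
      have h1 : List.idxOf x Wf.toList < Wf.toList.length :=
        List.idxOf_lt_length_iff.mpr (Finset.mem_toList.mpr hx)
      have h2 : Wf.toList.length = Wf.card := Finset.length_toList Wf
      omega
    have hψinj : ∀ x ∈ Wf, ∀ y ∈ Wf, ψ x = ψ y → x = y := by
      intro x hx y hy hxy
      exact (List.idxOf_inj (Finset.mem_toList.mpr hx)).mp hxy
    -- the farthest vertex from a₀
    obtain ⟨u', hu'W, hu'max⟩ := Finset.exists_max_image Wf (fun x => GW.dist a₀ x) ⟨u₀, hu₀⟩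
    set α : ℕ := ψ u' with hα
    have hαlt : α < k := hψlt u' hu'W
    set c' : Option V → ℕ :=
      fun o => o.elim α (fun x => if x ∈ Wf then ψ x else α) with hc'def
    have hc'some : ∀ x ∈ Wf, c' (some x) = ψ x := by
      intro x hx
      simp only [hc'def, Option.elim]
      rw [if_pos hx]
    have hc'S : ∀ x ∈ S, c' (some x) = α := by
      intro x hx
      simp only [hc'def, Option.elim]
      rw [if_neg (by rw [hWf, Finset.mem_compl, not_not]; exact hx)]
    let g : GW →g G' := ⟨some, fun h => addVertex_adj_some_some h.2.2⟩
    have hgsup : ∀ {x y : V} (p : GW.Walk x y), (p.map g).support = p.support.map some :=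
      fun p => Walk.support_map g p
    have hmapψ : ∀ l : List V, (∀ x ∈ l, x ∈ Wf) → (l.map some).map c' = l.map ψ := by
      intro l hl
      rw [List.map_map]
      exact List.map_congr_left fun x hx => hc'some x (hl x hx)
    have hψnodup : ∀ l : List V, l.Nodup → (∀ x ∈ l, x ∈ Wf) → (l.map ψ).Nodup :=
      fun l hn hl => List.Nodup.map_on
        (fun x hx y hy hxy => hψinj x (hl x hx) y (hl y hy) hxy) hn
    have hψltl : ∀ l : List V, (∀ x ∈ l, x ∈ Wf) → ∀ m ∈ l.map ψ, m < k := by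
      intro l hl m hm
      obtain ⟨x, hx, rfl⟩ := List.mem_map.mp hm
      exact hψlt x (hl x hx)
    have hGWsup : ∀ {x y : V} (p : GW.Walk x y), x ∈ Wf → ∀ z ∈ p.support, z ∈ Wf :=
      fun p hx z hz => Finset.mem_coe.mp (restrict_support_mem p (Finset.mem_coe.mpr hx) z hz)
    -- paths inside Wf avoiding u' internally
    have hLem : ∀ v ∈ Wf, ∃ p : GW.Walk a₀ v, p.IsPath ∧
        (∀ z ∈ p.support, z ∈ Wf) ∧ u' ∉ p.support.dropLast := by
      intro v hv
      by_cases hvu : v = u'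
      · obtain ⟨w⟩ := hR a₀ ha₀W v hv
        refine ⟨w.toPath, w.toPath.2, hGWsup _ ha₀W, ?_⟩
        intro hmem
        exact path_end_not_mem_dropLast _ w.toPath.2 (hvu ▸ hmem)
      · obtain ⟨w0, hw0len⟩ := Reachable.exists_walk_length_eq_dist (hR a₀ ha₀W v hv)
        have hnot : u' ∉ w0.support := by
          intro hmem
          have h1 := SimpleGraph.dist_le (w0.takeUntil u' hmem)
          have h2 := SimpleGraph.dist_le (w0.dropUntil u' hmem)
          have h3 : (w0.takeUntil u' hmem).length + (w0.dropUntil u' hmem).length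
              = w0.length := by
            rw [← Walk.length_append, w0.take_spec hmem]
          have h4 : GW.dist a₀ v ≤ GW.dist a₀ u' := hu'max v hv
          have h5 : GW.dist u' v = 0 := by omega
          rcases SimpleGraph.dist_eq_zero_iff_eq_or_not_reachable.mp h5 with h | h
          · exact hvu h.symm
          · exact h (hR u' hu'W v hv)
        refine ⟨w0.toPath, w0.toPath.2, hGWsup _ ha₀W, ?_⟩
        intro hmem
        exact hnot (Walk.support_toPath_subset w0 (List.mem_of_mem_dropLast hmem))
    -- walks from the new vertex to Wf
    have hnoneW : ∀ v ∈ Wf, GoodW G' c' k none (some v) := by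
      intro v hv
      obtain ⟨p, hp, hpsub, hpav⟩ := hLem v hv
      have hs₁W : s₁ ∉ Wf := by rw [hWf, Finset.mem_compl, not_not]; exact hs₁
      have hne : (p.support.map some) ≠ [] := by simp [p.support_ne_nil]
      refine ⟨Walk.cons (addVertex_adj_none_some (by simpa using hs₁))
        (Walk.cons (addVertex_adj_some_some ha₀adj) (p.map g)), ?_, ?_, ?_⟩
      · rw [Walk.cons_isPath_iff, Walk.cons_isPath_iff]
        refine ⟨⟨Walk.map_isPath_of_injective (Option.some_injective V) hp, ?_⟩, ?_⟩
        · rw [hgsup p, List.mem_map]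
          rintro ⟨y, hy, hy2⟩
          exact hs₁W ((Option.some_injective V hy2) ▸ hpsub y hy)
        · rw [Walk.support_cons, List.mem_cons]
          rintro (h | h)
          · simp at h
          · rw [hgsup p, List.mem_map] at h
            obtain ⟨y, -, hy2⟩ := h
            cases hy2
      · rw [Walk.support_cons, Walk.support_cons, List.tail_cons, hgsup p,
          List.dropLast_cons_of_ne_nil hne, List.map_cons,
          show (p.support.map some).dropLast = p.support.dropLast.map some
            from List.map_dropLast.symm,
          hmapψ _ (fun x hx => hpsub x (List.mem_of_mem_dropLast hx)),
          hc'S s₁ hs₁, List.nodup_cons]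
        constructor
        · intro hmem
          obtain ⟨y, hy, hyψ⟩ := List.mem_map.mp hmem
          have hyW : y ∈ Wf := hpsub y (List.mem_of_mem_dropLast hy)
          exact hpav ((hψinj y hyW u' hu'W hyψ) ▸ hy)
        · exact hψnodup _ (List.Nodup.sublist (List.dropLast_sublist _) hp.support_nodup)
            (fun x hx => hpsub x (List.mem_of_mem_dropLast hx))
      · intro x hx
        rw [Walk.support_cons, Walk.support_cons, List.tail_cons, hgsup p,
          List.dropLast_cons_of_ne_nil hne] at hx
        rcases List.mem_cons.mp hx with h | h
        · rw [h, hc'S s₁ hs₁]; exact hαlt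
        · rw [show (p.support.map some).dropLast = p.support.dropLast.map some
            from List.map_dropLast.symm] at h
          obtain ⟨y, hy, rfl⟩ := List.mem_map.mp h
          rw [hc'some y (hpsub y (List.mem_of_mem_dropLast hy))]
          exact hψlt y (hpsub y (List.mem_of_mem_dropLast hy))
    -- walks between two vertices of Wf
    have hWW : ∀ a ∈ Wf, ∀ b ∈ Wf, GoodW G' c' k (some a) (some b) := by
      intro a ha b hb
      obtain ⟨w⟩ := hR a ha b hb
      have hsub : ∀ z ∈ (w.toPath : GW.Walk a b).support, z ∈ Wf := hGWsup _ ha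
      refine ⟨(w.toPath : GW.Walk a b).map g,
        Walk.map_isPath_of_injective (Option.some_injective V) w.toPath.2, ?_, ?_⟩
      · rw [hgsup, map_tail_dropLast,
          hmapψ _ (fun x hx => hsub x ((internals_sublist_support _).subset hx))]
        exact hψnodup _ (List.Nodup.sublist (internals_sublist_support _)
          w.toPath.2.support_nodup)
          (fun x hx => hsub x ((internals_sublist_support _).subset hx))
      · intro x hx
        rw [hgsup, map_tail_dropLast] at hx
        obtain ⟨y, hy, rfl⟩ := List.mem_map.mp hx
        rw [hc'some y (hsub y ((internals_sublist_support _).subset hy))]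
        exact hψlt y (hsub y ((internals_sublist_support _).subset hy))
    -- walks from S to Wf
    have hSW : ∀ a ∈ S, ∀ b ∈ Wf, GoodW G' c' k (some a) (some b) := by
      intro a ha b hb
      obtain ⟨a₂, ha₂W, ha₂adj⟩ := hB2 a ha
      obtain ⟨w⟩ := hR a₂ ha₂W b hb
      have haW : a ∉ Wf := by rw [hWf, Finset.mem_compl, not_not]; exact ha
      have hsub : ∀ z ∈ (w.toPath : GW.Walk a₂ b).support, z ∈ Wf := hGWsup _ ha₂W
      refine ⟨Walk.cons (addVertex_adj_some_some ha₂adj) ((w.toPath : GW.Walk a₂ b).map g),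
        ?_, ?_, ?_⟩
      · rw [Walk.cons_isPath_iff]
        refine ⟨Walk.map_isPath_of_injective (Option.some_injective V) w.toPath.2, ?_⟩
        rw [hgsup, List.mem_map]
        rintro ⟨y, hy, hy2⟩
        exact haW ((Option.some_injective V hy2) ▸ hsub y hy)
      · rw [Walk.support_cons, List.tail_cons, hgsup,
          show ((w.toPath : GW.Walk a₂ b).support.map some).dropLast
              = (w.toPath : GW.Walk a₂ b).support.dropLast.map some
            from List.map_dropLast.symm,
          hmapψ _ (fun x hx => hsub x (List.mem_of_mem_dropLast hx))]
        exact hψnodup _ (List.Nodup.sublist (List.dropLast_sublist _)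
          w.toPath.2.support_nodup)
          (fun x hx => hsub x (List.mem_of_mem_dropLast hx))
      · intro x hx
        rw [Walk.support_cons, List.tail_cons, hgsup,
          show ((w.toPath : GW.Walk a₂ b).support.map some).dropLast
              = (w.toPath : GW.Walk a₂ b).support.dropLast.map some
            from List.map_dropLast.symm] at hx
        obtain ⟨y, hy, rfl⟩ := List.mem_map.mp hx
        rw [hc'some y (hsub y (List.mem_of_mem_dropLast hy))]
        exact hψlt y (hsub y (List.mem_of_mem_dropLast hy))
    -- walks between two vertices of S
    have hSS : ∀ a ∈ S, ∀ b ∈ S, a ≠ b → GoodW G' c' k (some a) (some b) := by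
      intro a ha b hb hab
      refine ⟨Walk.cons (addVertex_adj_none_some (by simpa using ha)).symm
        (Walk.cons (addVertex_adj_none_some (by simpa using hb)) Walk.nil), ?_, ?_, ?_⟩
      · rw [Walk.cons_isPath_iff, Walk.cons_isPath_iff]
        refine ⟨⟨by simp, by simp⟩, by simp [hab]⟩
      · simp
      · intro x hx
        simp only [Walk.support_cons, Walk.support_nil, List.tail_cons] at hx
        simp at hx
        rw [hx]
        exact hαlt
    -- trivial walks
    have hnil : ∀ x : Option V, GoodW G' c' k x x :=
      fun x => ⟨Walk.nil, by simp, by simp, by simp⟩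
    have hnoneS : ∀ b ∈ S, GoodW G' c' k none (some b) := by
      intro b hb
      refine ⟨Walk.cons (addVertex_adj_none_some (by simpa using hb)) Walk.nil, ?_, ?_, ?_⟩
      · rw [Walk.cons_isPath_iff]; exact ⟨by simp, by simp⟩
      · simp
      · simp
    have hnoneAll : ∀ b : V, GoodW G' c' k none (some b) := by
      intro b
      by_cases hb : b ∈ S
      · exact hnoneS b hb
      · exact hnoneW b (Finset.mem_compl.mpr hb)
    have hGood : ∀ x y : Option V, GoodW G' c' k x y := by
      intro x y
      cases x with
      | none =>
        cases y with
        | none => exact hnil none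
        | some b => exact hnoneAll b
      | some a =>
        cases y with
        | none => exact (hnoneAll a).symm
        | some b =>
          by_cases hab : a = b
          · rw [hab]; exact hnil (some b)
          · by_cases ha : a ∈ S
            · by_cases hb : b ∈ S
              · exact hSS a ha b hb hab
              · exact hSW a ha b (Finset.mem_compl.mpr hb)
            · by_cases hb : b ∈ S
              · exact (hSW b hb a (Finset.mem_compl.mpr ha)).symm
              · exact hWW a (Finset.mem_compl.mpr ha) b (Finset.mem_compl.mpr hb)
    exact Nat.sInf_le ⟨c', hGood⟩
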